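/- Suppose φ is a nonzero element of the commutative subalgebra spanned by {z^λ w^λ : λ ∈ ℤ_{≥0}^n} of Z̃_n (equal to ℂ[Q_1,…,Q_{n-1}]), written as a polynomial φ(Q_1,…,Q_{n-1}). Then the invariant functional satisfies h_n(φ) = ((q²;q²)_{n-1}/(1−q²)^{n-1}) ∫_0^1 ∫_0^{Q_{n-1}} ⋯ ∫_0^{Q_2} φ(Q_1,…,Q_{n-1}) d_{q²}Q_1 ⋯ d_{q²}Q_{n-1}, where h_n is determined on basis monomials by h_n(z^λ w^μ) = δ_{λμ} q^{|λ|² + ∑_i (2(i−1)λ_i − λ_i²)} (q²;q²)_{λ_1}⋯(q²;q²)_{λ_n}(q²;q²)_{n-1}/(q²;q²)_{|λ|+n-1}. -/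

import Mathlib

/-- The (complex-valued) Jackson q-integral `∫_0^c f(x) d_q x = c(1-q) ∑_{k=0}^∞ f(c q^k) q^k`. -/
noncomputable def jacksonIntegralC (q c : ℝ) (f : ℝ → ℂ) : ℂ :=
  (c : ℂ) * (1 - (q : ℂ)) * ∑' k : ℕ, f (c * q ^ k) * (q : ℂ) ^ k

/-- Iterated (nested) Jackson q-integral: `nestIntC q m F` integrates the variables
`Q_1, …, Q_m` of `F`, each `Q_j` running from `0` to `Q_{j+1}`. -/
noncomputable def nestIntC (q : ℝ) : ℕ → ((ℕ → ℝ) → ℂ) → ((ℕ → ℝ) → ℂ)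
  | 0, F => F
  | (m + 1), F => fun Q =>
      jacksonIntegralC q (Q (m + 2)) (fun x => nestIntC q m F (Function.update Q (m + 1) x))

/-- The full invariant integral on `ℂ[Q_1,…,Q_{n-1}]` realized as an iterated Jackson
`q²`-integral over the nested simplex `0 ≤ Q_1 ≤ ⋯ ≤ Q_{n-1} ≤ 1`. -/
noncomputable def hnInt (q : ℝ) (n : ℕ) (F : (ℕ → ℝ) → ℂ) : ℂ :=
  jacksonIntegralC (q ^ 2) 1
    (fun x => nestIntC (q ^ 2) (n - 2) F (Function.update (fun _ => 0) (n - 1) x))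

/-- The basis monomial `z^λ w^λ` of `ℂ[Q_1,…,Q_{n-1}] ⊆ Z̃_n`, written as a function of the
commuting variables `Q_1, …, Q_{n-1}` (with the convention `Q_n = 1`):
`z^λ w^λ = Q_1^{λ_1}⋯Q_{n-1}^{λ_{n-1}} (Q_1/Q_2; q^{-2})_{λ_2} ⋯ (Q_{n-1}; q^{-2})_{λ_n}`. -/
noncomputable def monoQ (q : ℝ) (n : ℕ) (lam : ℕ → ℕ) (Q : ℕ → ℝ) : ℂ :=
  (∏ i ∈ Finset.Icc 1 (n - 1), ((Q i : ℂ)) ^ lam i) *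
    ∏ i ∈ Finset.Icc 2 n, ∏ j ∈ Finset.range (lam i),
      (1 - ((Q (i - 1) : ℂ) / (if i = n then 1 else (Q i : ℂ))) * (((q : ℂ) ^ 2)⁻¹) ^ j)

/-- The value of the invariant functional `h_n` on the basis monomial `z^λ w^λ`:
`h_n(z^λ w^λ) = q^{|λ|² + ∑_i (2(i−1)λ_i − λ_i²)} (q²;q²)_{λ_1}⋯(q²;q²)_{λ_n}(q²;q²)_{n-1} /
(q²;q²)_{|λ|+n-1}`. -/
noncomputable def hnVal (q : ℝ) (n : ℕ) (lam : ℕ → ℕ) : ℂ :=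
  (q : ℂ) ^ ((((∑ i ∈ Finset.Icc 1 n, lam i) ^ 2 : ℕ) : ℤ) +
      ∑ i ∈ Finset.Icc 1 n, (((2 * (i - 1) * lam i : ℕ) : ℤ) - ((lam i ^ 2 : ℕ) : ℤ))) *
    (∏ i ∈ Finset.Icc 1 n, ∏ j ∈ Finset.range (lam i), (1 - (q : ℂ) ^ 2 * ((q : ℂ) ^ 2) ^ j)) *
    (∏ j ∈ Finset.range (n - 1), (1 - (q : ℂ) ^ 2 * ((q : ℂ) ^ 2) ^ j)) /
    (∏ j ∈ Finset.range ((∑ i ∈ Finset.Icc 1 n, lam i) + n - 1),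
      (1 - (q : ℂ) ^ 2 * ((q : ℂ) ^ 2) ^ j))

open Finset in
noncomputable def poch (P : ℂ) (a β : ℕ) : ℂ := ∏ j ∈ Finset.range β, (1 - P ^ (a + j))

open Finset
def Ssum (lam : ℕ → ℕ) (i : ℕ) : ℕ := ∑ k ∈ Finset.Icc 1 i, lam k

lemma one_sub_ne {z : ℂ} (h : ‖z‖ < 1) : 1 - z ≠ 0 := by
  intro hz
  have : z = 1 := by linear_combination -hz
  rw [this] at h; simp at h

lemma summable_geo_prod (P x : ℂ) (hP : ‖P‖ ≤ 1) (hx : ‖x‖ < 1) (β : ℕ) :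
    Summable (fun m : ℕ => x ^ m * ∏ j ∈ range β, (1 - P ^ (m + 1 + j))) := by
  apply Summable.of_norm_bounded (g := fun m => 2 ^ β * ‖x‖ ^ m)
  · exact (summable_geometric_of_lt_one (norm_nonneg x) hx).mul_left _
  · intro m
    rw [norm_mul, norm_pow, mul_comm]
    apply mul_le_mul_of_nonneg_right _ (by positivity)
    calc ‖∏ j ∈ range β, (1 - P ^ (m+1+j))‖ ≤ ∏ j ∈ range β, ‖1 - P^(m+1+j)‖ :=
          norm_prod_le _ _
      _ ≤ ∏ _j ∈ range β, (2:ℝ) := by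
          apply Finset.prod_le_prod (fun _ _ => norm_nonneg _)
          intro j _
          calc ‖1 - P^(m+1+j)‖ ≤ ‖(1:ℂ)‖ + ‖P^(m+1+j)‖ := norm_sub_le _ _
            _ ≤ 1 + 1 := by
                rw [norm_one, norm_pow]
                have := pow_le_one₀ (norm_nonneg P) hP (n := m+1+j)
                linarith
            _ = 2 := by norm_num
      _ = 2 ^ β := by simp

lemma key_series (P : ℂ) (hP : ‖P‖ < 1) :
    ∀ (β : ℕ) (x : ℂ), ‖x‖ < 1 →
      (∑' m : ℕ, x ^ m * ∏ j ∈ range β, (1 - P ^ (m + 1 + j)))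
        = (∏ j ∈ range β, (1 - P ^ (1 + j))) / ∏ j ∈ range (β + 1), (1 - x * P ^ j) := by
  intro β
  induction β with
  | zero =>
    intro x hx
    simp [tsum_geometric_of_norm_lt_one hx]
  | succ β ih =>
    intro x hx
    have hxP : ‖x * P‖ < 1 := by
      rw [norm_mul]
      nlinarith [norm_nonneg x, norm_nonneg P]
    have hsum1 := summable_geo_prod P x hP.le hx β
    have hsum2 := summable_geo_prod P (x * P) hP.le hxP β
    have split : ∀ m : ℕ, x ^ m * ∏ j ∈ range (β+1), (1 - P ^ (m+1+j))
        = x ^ m * ∏ j ∈ range β, (1 - P ^ (m+1+j))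
          - P ^ (β+1) * ((x*P) ^ m * ∏ j ∈ range β, (1 - P ^ (m+1+j))) := by
      intro m
      rw [prod_range_succ]
      ring
    rw [tsum_congr split, Summable.tsum_sub hsum1 (hsum2.mul_left _), tsum_mul_left,
      ih x hx, ih (x*P) hxP]
    -- now pure algebra
    have hne : ∀ (y : ℂ) (j : ℕ), ‖y‖ < 1 → 1 - y * P ^ j ≠ 0 := by
      intro y j hy
      apply one_sub_ne
      rw [norm_mul, norm_pow]
      calc ‖y‖ * ‖P‖^j ≤ ‖y‖ * 1 := by
            apply mul_le_mul_of_nonneg_left (pow_le_one₀ (norm_nonneg _) hP.le) (norm_nonneg _)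
        _ < 1 := by simpa using hy
    have hB : ∏ j ∈ range (β+1), (1 - x*P*P^j) = ∏ j ∈ range (β+1), (1 - x*P^(j+1)) :=
      prod_congr rfl (by intro j _; ring)
    have hAne : ∏ j ∈ range (β+1), (1 - x*P^j) ≠ 0 :=
      prod_ne_zero_iff.mpr (fun j _ => hne x j hx)
    have hBne : ∏ j ∈ range (β+1), (1 - x*P^(j+1)) ≠ 0 := by
      rw [← hB]
      exact prod_ne_zero_iff.mpr (fun j _ => hne (x*P) j hxP)
    have hc1 : ∏ j ∈ range (β+1+1), (1 - x*P^j)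
        = (∏ j ∈ range (β+1), (1 - x*P^(j+1))) * (1 - x) := by
      rw [prod_range_succ']
      simp
    have hc2 : ∏ j ∈ range (β+1+1), (1-x*P^j)
        = (∏ j ∈ range (β+1), (1-x*P^j)) * (1 - x*P^(β+1)) := prod_range_succ _ _
    have hrel : (∏ j ∈ range (β+1), (1-x*P^j)) * (1 - x*P^(β+1))
        = (∏ j ∈ range (β+1), (1 - x*P^(j+1))) * (1 - x) := by rw [← hc2, hc1]
    rw [prod_range_succ (fun j => (1 - P^(1+j))) β, hB, hc1]
    have hxne : (1:ℂ) - x ≠ 0 := one_sub_ne hx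
    set A := ∏ j ∈ range (β+1), (1 - x*P^j)
    set B := ∏ j ∈ range (β+1), (1 - x*P^(j+1))
    set N := ∏ j ∈ range β, (1 - P^(1+j))
    have hxPne : (1:ℂ) - x * P^(β+1) ≠ 0 := hne x (β+1) hx
    have hA' : A = B * (1-x) / (1 - x*P^(β+1)) := by
      rw [eq_div_iff hxPne]; exact hrel
    rw [hA']
    field_simp
    ring

section Jackson
open Finset

lemma jacksonIntegralC_congr {q c : ℝ} {f g : ℝ → ℂ}
    (h : ∀ k : ℕ, f (c * q ^ k) = g (c * q ^ k)) :
    jacksonIntegralC q c f = jacksonIntegralC q c g := by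
  unfold jacksonIntegralC
  rw [tsum_congr (fun k => by rw [h k])]

lemma jacksonIntegralC_const_mul (q c : ℝ) (a : ℂ) (f : ℝ → ℂ) :
    jacksonIntegralC q c (fun x => a * f x) = a * jacksonIntegralC q c f := by
  unfold jacksonIntegralC
  simp only [mul_assoc]
  rw [tsum_mul_left]
  ring

lemma jacksonIntegralC_sum {ι : Type*} {q c : ℝ} {s : Finset ι} {f : ι → ℝ → ℂ}
    (h : ∀ i ∈ s, Summable (fun k : ℕ => f i (c * q ^ k) * (q:ℂ) ^ k)) :
    jacksonIntegralC q c (fun x => ∑ i ∈ s, f i x) = ∑ i ∈ s, jacksonIntegralC q c (f i) := by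
  unfold jacksonIntegralC
  rw [tsum_congr (fun k : ℕ => Finset.sum_mul s (fun i => f i (c*q^k)) ((q:ℂ)^k)),
    Summable.tsum_finsetSum h, Finset.mul_sum]

/-- The standard integrand `x^α (x/c; p⁻¹)_β`. -/
noncomputable def Jint (p c : ℝ) (α β : ℕ) : ℝ → ℂ := fun x =>
  ((x:ℂ)) ^ α * ∏ j ∈ Finset.range β, (1 - ((x:ℂ) / (c:ℂ)) * ((p:ℂ)⁻¹) ^ j)

lemma Jint_term (p c : ℝ) (hp0 : 0 < p) (hc : c ≠ 0) (α β : ℕ) (k : ℕ) :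
    Jint p c α β (c * p ^ k) * (p:ℂ) ^ k
      = (c:ℂ)^α * ((p:ℂ) ^ (k*(α+1)) * ∏ j ∈ Finset.range β, (1 - (p:ℂ)^k * ((p:ℂ)⁻¹) ^ j)) := by
  unfold Jint
  have hcc : (c:ℂ) ≠ 0 := by exact_mod_cast hc
  have h1 : ((c * p ^ k : ℝ) : ℂ) = (c:ℂ) * (p:ℂ)^k := by push_cast; ring
  rw [h1]
  have h2 : ∀ j : ℕ, (1 - ((c:ℂ) * (p:ℂ)^k / (c:ℂ)) * ((p:ℂ)⁻¹) ^ j)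
      = (1 - (p:ℂ)^k * ((p:ℂ)⁻¹) ^ j) := by
    intro j
    rw [mul_div_cancel_left₀ _ hcc]
  rw [prod_congr rfl (fun j _ => h2 j), mul_pow]
  ring

lemma vsum_summable (p : ℝ) (hp0 : 0 < p) (hp1 : p < 1) (α β : ℕ) :
    Summable (fun k : ℕ => (p:ℂ) ^ (k*(α+1)) * ∏ j ∈ Finset.range β, (1 - (p:ℂ)^k * ((p:ℂ)⁻¹) ^ j)) := by
  apply Summable.of_norm_bounded (g := fun k => (1 + p⁻¹^β)^β * p ^ k)
  · exact ((summable_geometric_of_lt_one hp0.le hp1).mul_left _)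
  · intro k
    rw [norm_mul]
    have hb1 : ‖(p:ℂ) ^ (k*(α+1))‖ ≤ p ^ k := by
      rw [norm_pow, Complex.norm_real, Real.norm_eq_abs, abs_of_pos hp0]
      exact pow_le_pow_of_le_one hp0.le hp1.le (Nat.le_mul_of_pos_right k (by omega))
    have hb2 : ‖∏ j ∈ Finset.range β, (1 - (p:ℂ)^k * ((p:ℂ)⁻¹) ^ j)‖ ≤ (1 + p⁻¹^β)^β := by
      calc ‖∏ j ∈ Finset.range β, (1 - (p:ℂ)^k * ((p:ℂ)⁻¹) ^ j)‖
          ≤ ∏ j ∈ Finset.range β, ‖(1 - (p:ℂ)^k * ((p:ℂ)⁻¹) ^ j)‖ := norm_prod_le _ _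
        _ ≤ ∏ _j ∈ Finset.range β, (1 + p⁻¹^β) := by
            apply Finset.prod_le_prod (fun _ _ => norm_nonneg _)
            intro j hj
            calc ‖(1 - (p:ℂ)^k * ((p:ℂ)⁻¹) ^ j)‖ ≤ ‖(1:ℂ)‖ + ‖(p:ℂ)^k * ((p:ℂ)⁻¹) ^ j‖ :=
                  norm_sub_le _ _
              _ ≤ 1 + p⁻¹^β := by
                  rw [norm_one, norm_mul, norm_pow, norm_pow, norm_inv, Complex.norm_real, Real.norm_eq_abs,
                    abs_of_pos hp0]
                  have h1 : p ^ k ≤ 1 := pow_le_one₀ hp0.le hp1.le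
                  have h2 : (p⁻¹) ^ j ≤ p⁻¹ ^ β := by
                    apply pow_le_pow_right₀ (one_le_inv_iff₀.mpr ⟨hp0, hp1.le⟩)
                    exact (Finset.mem_range.mp hj).le
                  have h3 : (0:ℝ) < p⁻¹ ^ j := by positivity
                  nlinarith
        _ = (1 + p⁻¹^β)^β := by
            rw [Finset.prod_const, Finset.card_range]
    calc ‖(p:ℂ) ^ (k*(α+1))‖ * ‖∏ j ∈ Finset.range β, (1 - (p:ℂ)^k * ((p:ℂ)⁻¹) ^ j)‖
        ≤ (p^k) * ((1 + p⁻¹^β)^β) := by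
          apply mul_le_mul hb1 hb2 (norm_nonneg _) (by positivity)
      _ = (1 + p⁻¹^β)^β * p ^ k := by ring

lemma summable_Jint (p c : ℝ) (hp0 : 0 < p) (hp1 : p < 1) (hc : c ≠ 0) (α β : ℕ) :
    Summable (fun k : ℕ => Jint p c α β (c * p ^ k) * (p:ℂ) ^ k) := by
  rw [show (fun k : ℕ => Jint p c α β (c * p ^ k) * (p:ℂ) ^ k)
      = fun k => (c:ℂ)^α * ((p:ℂ) ^ (k*(α+1)) * ∏ j ∈ Finset.range β, (1 - (p:ℂ)^k * ((p:ℂ)⁻¹) ^ j))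
      from funext (fun k => Jint_term p c hp0 hc α β k)]
  exact (vsum_summable p hp0 hp1 α β).mul_left _

lemma vsum_value (p : ℝ) (hp0 : 0 < p) (hp1 : p < 1) (α β : ℕ) :
    ∑' k : ℕ, ((p:ℂ) ^ (k*(α+1)) * ∏ j ∈ Finset.range β, (1 - (p:ℂ)^k * ((p:ℂ)⁻¹) ^ j))
      = (p:ℂ) ^ (β*(α+1)) * poch (p:ℂ) 1 β / poch (p:ℂ) (α+1) (β+1) := by
  have hpc : (p:ℂ) ≠ 0 := by exact_mod_cast hp0.ne'
  have hPn : ‖(p:ℂ)‖ < 1 := by rw [Complex.norm_real, Real.norm_eq_abs, abs_of_pos hp0]; exact hp1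
  set v : ℕ → ℂ := fun k => (p:ℂ) ^ (k*(α+1)) * ∏ j ∈ Finset.range β, (1 - (p:ℂ)^k * ((p:ℂ)⁻¹) ^ j)
    with hv
  have hvz : ∀ k ∈ Finset.range β, v k = 0 := by
    intro k hk
    have : (1 - (p:ℂ)^k * ((p:ℂ)⁻¹) ^ k) = 0 := by
      rw [← mul_pow, mul_inv_cancel₀ hpc, one_pow, sub_self]
    exact mul_eq_zero_of_right _ (Finset.prod_eq_zero hk this)
  have hvsum : Summable v := vsum_summable p hp0 hp1 α β
  rw [← Summable.sum_add_tsum_nat_add β hvsum, Finset.sum_eq_zero hvz, zero_add]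
  have hshift : ∀ m : ℕ, v (m + β)
      = (p:ℂ)^(β*(α+1)) * (((p:ℂ)^(α+1))^m * ∏ j ∈ Finset.range β, (1 - (p:ℂ)^(m+1+j))) := by
    intro m
    have hprod : ∏ j ∈ Finset.range β, (1 - (p:ℂ)^(m+β) * ((p:ℂ)⁻¹) ^ j)
        = ∏ j ∈ Finset.range β, (1 - (p:ℂ)^(m+1+j)) := by
      rw [← prod_range_reflect (fun j => (1 - (p:ℂ)^(m+1+j))) β]
      apply prod_congr rfl
      intro j hj
      have hjβ : j < β := Finset.mem_range.mp hj
      have : (p:ℂ)^(m+β) * ((p:ℂ)⁻¹) ^ j = (p:ℂ)^(m+1+(β-1-j)) := by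
        rw [inv_pow, ← pow_sub₀ _ hpc (by omega : j ≤ m + β)]
        congr 1
        omega
      rw [this]
    rw [hv]
    simp only
    rw [hprod, add_mul, pow_add, ← pow_mul]
    ring
  rw [tsum_congr hshift, tsum_mul_left]
  have hx : ‖(p:ℂ)^(α+1)‖ < 1 := by
    rw [norm_pow]
    exact pow_lt_one₀ (norm_nonneg _) hPn (by omega)
  rw [key_series (p:ℂ) hPn β ((p:ℂ)^(α+1)) hx]
  unfold poch
  rw [mul_div_assoc]
  congr 2
  apply prod_congr rfl
  intro j _
  rw [← pow_add]

lemma jackson_Jint (p c : ℝ) (hp0 : 0 < p) (hp1 : p < 1) (hc : c ≠ 0) (α β : ℕ) :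
    jacksonIntegralC p c (Jint p c α β)
      = (c:ℂ)^(α+1) * (1 - (p:ℂ)) * ((p:ℂ) ^ (β*(α+1)) * poch (p:ℂ) 1 β / poch (p:ℂ) (α+1) (β+1)) := by
  unfold jacksonIntegralC
  rw [tsum_congr (fun k => Jint_term p c hp0 hc α β k), tsum_mul_left,
    vsum_value p hp0 hp1 α β]
  rw [pow_succ]
  ring

end Jackson
section Nest
open Finset

/-- The constant produced by integrating out `Q_1, …, Q_m`. -/
noncomputable def Cfac (P : ℂ) (lam : ℕ → ℕ) (m : ℕ) : ℂ :=
  ∏ i ∈ Finset.range m,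
    ((1 - P) * ((P ^ (lam (i+2) * (Ssum lam (i+1) + i + 1)) * poch P 1 (lam (i+2)))
      / poch P (Ssum lam (i+1) + i + 1) (lam (i+2) + 1)))

/-- What remains of the monomial after integrating out `Q_1, …, Q_m`. -/
noncomputable def Rfac (P : ℂ) (n : ℕ) (lam : ℕ → ℕ) (m : ℕ) (Q : ℕ → ℝ) : ℂ :=
  ((Q (m+1) : ℂ)) ^ (Ssum lam (m+1) + m) *
  (∏ i ∈ Finset.Icc (m+2) (n-1), ((Q i : ℂ)) ^ lam i) *
  ∏ i ∈ Finset.Icc (m+2) n, ∏ j ∈ Finset.range (lam i),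
    (1 - ((Q (i-1) : ℂ) / (if i = n then 1 else (Q i : ℂ))) * (P⁻¹) ^ j)

lemma Ssum_succ (lam : ℕ → ℕ) (i : ℕ) : Ssum lam (i+1) = Ssum lam i + lam (i+1) := by
  unfold Ssum
  rw [sum_Icc_succ_top (by omega)]

lemma Ssum_one (lam : ℕ → ℕ) : Ssum lam 1 = lam 1 := by
  unfold Ssum; rw [Finset.Icc_self, Finset.sum_singleton]

lemma monoQ_eq_Rfac (q : ℝ) (n : ℕ) (hn : 2 ≤ n) (lam : ℕ → ℕ) (Q : ℕ → ℝ) :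
    monoQ q n lam Q = Rfac ((q:ℂ)^2) n lam 0 Q := by
  unfold monoQ Rfac
  have hset : Finset.Icc 1 (n-1) = insert 1 (Finset.Icc 2 (n-1)) := by
    ext x; simp only [Finset.mem_Icc, Finset.mem_insert]; omega
  rw [hset, Finset.prod_insert (by simp), Ssum_one]
  ring_nf
  congr 1
  apply Finset.prod_congr rfl
  intro i _
  apply Finset.prod_congr rfl
  intro j _
  ring

lemma Rfac_update (P : ℂ) (n : ℕ) (lam : ℕ → ℕ) (m : ℕ) (Q : ℕ → ℝ) (x : ℝ)
    (hn : 2 ≤ n) (hm : m + 2 ≤ n - 1) :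
    Rfac P n lam m (Function.update Q (m+1) x)
      = (((Q (m+2) : ℂ)) ^ (lam (m+2)) *
         (∏ i ∈ Finset.Icc (m+3) (n-1), ((Q i : ℂ)) ^ lam i) *
         ∏ i ∈ Finset.Icc (m+3) n, ∏ j ∈ Finset.range (lam i),
           (1 - ((Q (i-1) : ℂ) / (if i = n then 1 else (Q i : ℂ))) * (P⁻¹) ^ j)) *
        (((x : ℂ)) ^ (Ssum lam (m+1) + m) *
         ∏ j ∈ Finset.range (lam (m+2)), (1 - ((x:ℂ) / (Q (m+2):ℂ)) * (P⁻¹) ^ j)) := by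
  have h1 : Function.update Q (m+1) x (m+1) = x := Function.update_self _ _ _
  have h2 : ∀ j, j ≠ m+1 → Function.update Q (m+1) x j = Q j :=
    fun j hj => Function.update_of_ne hj _ _
  unfold Rfac
  have hset1 : Finset.Icc (m+2) (n-1) = insert (m+2) (Finset.Icc (m+3) (n-1)) := by
    ext y; simp only [Finset.mem_Icc, Finset.mem_insert]; omega
  have hset2 : Finset.Icc (m+2) n = insert (m+2) (Finset.Icc (m+3) n) := by
    ext y; simp only [Finset.mem_Icc, Finset.mem_insert]; omega
  have hp1 : ∏ i ∈ Finset.Icc (m+3) (n-1), ((Function.update Q (m+1) x i : ℂ)) ^ lam i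
      = ∏ i ∈ Finset.Icc (m+3) (n-1), ((Q i : ℂ)) ^ lam i := by
    apply Finset.prod_congr rfl
    intro i hi
    have hi' := Finset.mem_Icc.mp hi
    rw [h2 i (by omega)]
  have hp2 : ∏ i ∈ Finset.Icc (m+3) n, ∏ j ∈ Finset.range (lam i),
        (1 - ((Function.update Q (m+1) x (i-1) : ℂ)
          / (if i = n then 1 else (Function.update Q (m+1) x i : ℂ))) * (P⁻¹) ^ j)
      = ∏ i ∈ Finset.Icc (m+3) n, ∏ j ∈ Finset.range (lam i),
        (1 - ((Q (i-1) : ℂ) / (if i = n then 1 else (Q i : ℂ))) * (P⁻¹) ^ j) := by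
    apply Finset.prod_congr rfl
    intro i hi
    have hi' := Finset.mem_Icc.mp hi
    rw [h2 (i-1) (by omega), h2 i (by omega)]
  rw [hset1, hset2, Finset.prod_insert (by simp), Finset.prod_insert (by simp)]
  rw [h1, if_neg (show ¬ (m+2 = n) from by omega), show m+2-1 = m+1 from by omega, h1,
    h2 (m+2) (by omega), hp1, hp2]
  ring

lemma Rfac_update_Jint (q : ℝ) (n : ℕ) (lam : ℕ → ℕ) (m : ℕ) (Q : ℕ → ℝ) (x : ℝ)
    (hn : 2 ≤ n) (hm : m + 2 ≤ n - 1) :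
    Rfac ((q:ℂ)^2) n lam m (Function.update Q (m+1) x)
      = (((Q (m+2) : ℂ)) ^ (lam (m+2)) *
         (∏ i ∈ Finset.Icc (m+3) (n-1), ((Q i : ℂ)) ^ lam i) *
         ∏ i ∈ Finset.Icc (m+3) n, ∏ j ∈ Finset.range (lam i),
           (1 - ((Q (i-1) : ℂ) / (if i = n then 1 else (Q i : ℂ))) * ((((q:ℂ)^2)⁻¹)) ^ j)) *
        Jint (q^2) (Q (m+2)) (Ssum lam (m+1) + m) (lam (m+2)) x := by
  rw [Rfac_update _ n lam m Q x hn hm]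
  unfold Jint
  have hc : ((q^2 : ℝ) : ℂ) = (q:ℂ)^2 := by push_cast; ring
  rw [hc]

lemma summable_Rfac (q : ℝ) (h0 : 0 < q) (h1 : q < 1) (n : ℕ) (hn : 2 ≤ n)
    (lam : ℕ → ℕ) (m : ℕ) (hm : m + 2 ≤ n - 1) (Q : ℕ → ℝ) (hQ : 0 < Q (m+2)) :
    Summable (fun k : ℕ =>
      Rfac ((q:ℂ)^2) n lam m (Function.update Q (m+1) (Q (m+2) * (q^2)^k)) * (((q^2:ℝ)):ℂ)^k) := by
  have hp0 : 0 < q^2 := by positivity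
  have hp1 : q^2 < 1 := by nlinarith
  have := (summable_Jint (q^2) (Q (m+2)) hp0 hp1 hQ.ne' (Ssum lam (m+1) + m) (lam (m+2))).mul_left
    (((Q (m+2) : ℂ)) ^ (lam (m+2)) *
         (∏ i ∈ Finset.Icc (m+3) (n-1), ((Q i : ℂ)) ^ lam i) *
         ∏ i ∈ Finset.Icc (m+3) n, ∏ j ∈ Finset.range (lam i),
           (1 - ((Q (i-1) : ℂ) / (if i = n then 1 else (Q i : ℂ))) * ((((q:ℂ)^2)⁻¹)) ^ j))
  apply this.congr
  intro k
  rw [Rfac_update_Jint q n lam m Q _ hn hm]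
  ring

lemma jackson_Rfac (q : ℝ) (h0 : 0 < q) (h1 : q < 1) (n : ℕ) (hn : 2 ≤ n)
    (lam : ℕ → ℕ) (m : ℕ) (hm : m + 2 ≤ n - 1) (Q : ℕ → ℝ) (hQ : 0 < Q (m+2)) :
    jacksonIntegralC (q^2) (Q (m+2)) (fun x => Rfac ((q:ℂ)^2) n lam m (Function.update Q (m+1) x))
      = ((1 - ((q:ℂ)^2)) * ((((q:ℂ)^2) ^ (lam (m+2) * (Ssum lam (m+1) + m + 1))
            * poch ((q:ℂ)^2) 1 (lam (m+2)))
          / poch ((q:ℂ)^2) (Ssum lam (m+1) + m + 1) (lam (m+2) + 1)))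
        * Rfac ((q:ℂ)^2) n lam (m+1) Q := by
  have hp0 : 0 < q^2 := by positivity
  have hp1 : q^2 < 1 := by nlinarith
  have hc : ((q^2 : ℝ) : ℂ) = (q:ℂ)^2 := by push_cast; ring
  rw [show (fun x => Rfac ((q:ℂ)^2) n lam m (Function.update Q (m+1) x))
      = (fun x => (((Q (m+2) : ℂ)) ^ (lam (m+2)) *
         (∏ i ∈ Finset.Icc (m+3) (n-1), ((Q i : ℂ)) ^ lam i) *
         ∏ i ∈ Finset.Icc (m+3) n, ∏ j ∈ Finset.range (lam i),
           (1 - ((Q (i-1) : ℂ) / (if i = n then 1 else (Q i : ℂ))) * ((((q:ℂ)^2)⁻¹)) ^ j)) *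
        Jint (q^2) (Q (m+2)) (Ssum lam (m+1) + m) (lam (m+2)) x)
      from funext (fun x => Rfac_update_Jint q n lam m Q x hn hm)]
  rw [jacksonIntegralC_const_mul, jackson_Jint (q^2) (Q (m+2)) hp0 hp1 hQ.ne', hc]
  unfold Rfac
  rw [show Ssum lam (m+1+1) + (m+1) = (Ssum lam (m+1) + m + 1) + lam (m+2) from by
    rw [Ssum_succ]; ring, pow_add]
  rw [show m+1+1 = m+2 from rfl, show m+1+2 = m+3 from rfl]
  rw [show lam (m+2) * (Ssum lam (m+1) + m + 1) = lam (m+2) * (Ssum lam (m+1) + m + 1) from rfl]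
  ring

lemma Cfac_succ (P : ℂ) (lam : ℕ → ℕ) (m : ℕ) :
    Cfac P lam (m+1) = Cfac P lam m *
      ((1 - P) * ((P ^ (lam (m+2) * (Ssum lam (m+1) + m + 1)) * poch P 1 (lam (m+2)))
        / poch P (Ssum lam (m+1) + m + 1) (lam (m+2) + 1))) := by
  unfold Cfac
  rw [Finset.prod_range_succ]

lemma nest_eval (q : ℝ) (h0 : 0 < q) (h1 : q < 1) (n : ℕ) (hn : 2 ≤ n)
    (s : Finset (ℕ → ℕ)) (coef : (ℕ → ℕ) → ℂ) :
    ∀ m, m ≤ n - 2 → ∀ Q : ℕ → ℝ, (∀ j, m + 1 ≤ j → j ≤ n - 1 → 0 < Q j) →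
      nestIntC (q^2) m (fun Q' => ∑ lam ∈ s, coef lam * monoQ q n lam Q') Q
        = ∑ lam ∈ s, coef lam * (Cfac ((q:ℂ)^2) lam m * Rfac ((q:ℂ)^2) n lam m Q) := by
  intro m
  induction m with
  | zero =>
    intro _ Q _
    show (∑ lam ∈ s, coef lam * monoQ q n lam Q) = _
    apply Finset.sum_congr rfl
    intro lam _
    rw [monoQ_eq_Rfac q n hn lam Q]
    unfold Cfac
    rw [Finset.prod_range_zero, one_mul]
  | succ m ih =>
    intro hm Q hQ
    have hp0 : 0 < q^2 := by positivity
    have hm' : m ≤ n - 2 := by omega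
    have hm2 : m + 2 ≤ n - 1 := by omega
    have hQm2 : 0 < Q (m+2) := hQ (m+2) (by omega) (by omega)
    show jacksonIntegralC (q^2) (Q (m+2))
        (fun x => nestIntC (q^2) m (fun Q' => ∑ lam ∈ s, coef lam * monoQ q n lam Q')
          (Function.update Q (m+1) x)) = _
    have hcong : ∀ k : ℕ,
        nestIntC (q^2) m (fun Q' => ∑ lam ∈ s, coef lam * monoQ q n lam Q')
            (Function.update Q (m+1) (Q (m+2) * (q^2)^k))
          = ∑ lam ∈ s, coef lam *
              (Cfac ((q:ℂ)^2) lam m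
                * Rfac ((q:ℂ)^2) n lam m (Function.update Q (m+1) (Q (m+2) * (q^2)^k))) := by
      intro k
      apply ih hm'
      intro j hj1 hj2
      rcases eq_or_ne j (m+1) with h|h
      · rw [h, Function.update_self]
        positivity
      · rw [Function.update_of_ne h]
        exact hQ j (by omega) hj2
    rw [jacksonIntegralC_congr
      (g := fun x => ∑ lam ∈ s, coef lam *
        (Cfac ((q:ℂ)^2) lam m * Rfac ((q:ℂ)^2) n lam m (Function.update Q (m+1) x))) hcong]
    rw [jacksonIntegralC_sum (f := fun lam x => coef lam *
        (Cfac ((q:ℂ)^2) lam m * Rfac ((q:ℂ)^2) n lam m (Function.update Q (m+1) x)))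
      (fun lam _ => by
        apply ((summable_Rfac q h0 h1 n hn lam m hm2 Q hQm2).mul_left
          (coef lam * Cfac ((q:ℂ)^2) lam m)).congr
        intro k
        ring)]
    apply Finset.sum_congr rfl
    intro lam _
    rw [show (fun x => coef lam * (Cfac ((q:ℂ)^2) lam m
          * Rfac ((q:ℂ)^2) n lam m (Function.update Q (m+1) x)))
        = (fun x => (coef lam * Cfac ((q:ℂ)^2) lam m)
          * Rfac ((q:ℂ)^2) n lam m (Function.update Q (m+1) x)) from funext (fun x => by ring)]
    rw [jacksonIntegralC_const_mul, jackson_Rfac q h0 h1 n hn lam m hm2 Q hQm2, Cfac_succ]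
    ring

lemma Rfac_top (q : ℝ) (n : ℕ) (lam : ℕ → ℕ) (hn : 2 ≤ n) (Q0 : ℕ → ℝ) (x : ℝ) :
    Rfac ((q:ℂ)^2) n lam (n-2) (Function.update Q0 (n-1) x)
      = Jint (q^2) 1 (Ssum lam (n-1) + (n-2)) (lam n) x := by
  unfold Rfac Jint
  have e1 : n - 2 + 1 = n - 1 := by omega
  have e2 : n - 2 + 2 = n := by omega
  rw [e1, e2]
  rw [Function.update_self]
  rw [show Finset.Icc n (n-1) = ∅ from Finset.Icc_eq_empty (by omega), Finset.prod_empty,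
    Finset.Icc_self, Finset.prod_singleton, if_pos rfl]
  rw [show n - 1 = n - 1 from rfl]
  have hcast : ((q^2 : ℝ) : ℂ) = (q:ℂ)^2 := by push_cast; ring
  rw [Function.update_self, hcast]
  norm_num

lemma hnInt_eval (q : ℝ) (h0 : 0 < q) (h1 : q < 1) (n : ℕ) (hn : 2 ≤ n)
    (s : Finset (ℕ → ℕ)) (coef : (ℕ → ℕ) → ℂ) :
    hnInt q n (fun Q => ∑ lam ∈ s, coef lam * monoQ q n lam Q)
      = ∑ lam ∈ s, coef lam * Cfac ((q:ℂ)^2) lam (n-1) := by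
  have hp0 : 0 < q^2 := by positivity
  have hp1 : q^2 < 1 := by nlinarith
  unfold hnInt
  have hcong : ∀ k : ℕ,
      nestIntC (q^2) (n-2) (fun Q' => ∑ lam ∈ s, coef lam * monoQ q n lam Q')
          (Function.update (fun _ => 0) (n-1) ((1:ℝ) * (q^2)^k))
        = ∑ lam ∈ s, coef lam *
            (Cfac ((q:ℂ)^2) lam (n-2) * Jint (q^2) 1 (Ssum lam (n-1) + (n-2)) (lam n)
              ((1:ℝ) * (q^2)^k)) := by
    intro k
    rw [nest_eval q h0 h1 n hn s coef (n-2) (by omega) _ (fun j hj1 hj2 => by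
      rw [show j = n-1 from by omega, Function.update_self]
      positivity)]
    apply Finset.sum_congr rfl
    intro lam _
    rw [Rfac_top q n lam hn _ _]
  rw [jacksonIntegralC_congr
    (g := fun x => ∑ lam ∈ s, coef lam *
      (Cfac ((q:ℂ)^2) lam (n-2) * Jint (q^2) 1 (Ssum lam (n-1) + (n-2)) (lam n) x)) hcong]
  rw [jacksonIntegralC_sum (f := fun lam x => coef lam *
      (Cfac ((q:ℂ)^2) lam (n-2) * Jint (q^2) 1 (Ssum lam (n-1) + (n-2)) (lam n) x))
    (fun lam _ => by
      apply ((summable_Jint (q^2) 1 hp0 hp1 one_ne_zero (Ssum lam (n-1) + (n-2)) (lam n)).mul_left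
        (coef lam * Cfac ((q:ℂ)^2) lam (n-2))).congr
      intro k
      ring)]
  apply Finset.sum_congr rfl
  intro lam _
  rw [show (fun x => coef lam * (Cfac ((q:ℂ)^2) lam (n-2)
        * Jint (q^2) 1 (Ssum lam (n-1) + (n-2)) (lam n) x))
      = (fun x => (coef lam * Cfac ((q:ℂ)^2) lam (n-2))
        * Jint (q^2) 1 (Ssum lam (n-1) + (n-2)) (lam n) x) from funext (fun x => by ring)]
  rw [jacksonIntegralC_const_mul, jackson_Jint (q^2) 1 hp0 hp1 one_ne_zero]
  have hcast : ((q^2 : ℝ) : ℂ) = (q:ℂ)^2 := by push_cast; ring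
  rw [hcast]
  have hsucc : n - 1 = (n-2) + 1 := by omega
  rw [hsucc, Cfac_succ]
  rw [show n - 2 + 2 = n from by omega, show n - 2 + 1 = n - 1 from by omega]
  rw [show Ssum lam (n-1) + (n-2) + 1 = Ssum lam (n-1) + (n-2) + 1 from rfl]
  push_cast
  ring

lemma poch_ne_zero (q : ℝ) (h0 : 0 < q) (h1 : q < 1) (a b : ℕ) (ha : 1 ≤ a) :
    poch ((q:ℂ)^2) a b ≠ 0 := by
  unfold poch
  apply Finset.prod_ne_zero_iff.mpr
  intro j _
  apply one_sub_ne
  rw [← pow_mul, norm_pow, Complex.norm_real, Real.norm_eq_abs, abs_of_pos h0]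
  apply pow_lt_one₀ h0.le h1
  omega

lemma Cfac_eq (P : ℂ) (lam : ℕ → ℕ) (k : ℕ) :
    Cfac P lam k = (1-P)^k *
      ((P ^ (∑ i ∈ Finset.range k, lam (i+2) * (Ssum lam (i+1) + i + 1))
        * ∏ i ∈ Finset.range k, poch P 1 (lam (i+2)))
      / ∏ i ∈ Finset.range k, poch P (Ssum lam (i+1) + i + 1) (lam (i+2) + 1)) := by
  unfold Cfac
  rw [Finset.prod_congr rfl (fun i _ => (mul_div_assoc' _ _ _ : (1-P) *
      ((P ^ (lam (i+2) * (Ssum lam (i+1) + i + 1)) * poch P 1 (lam (i+2)))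
        / poch P (Ssum lam (i+1) + i + 1) (lam (i+2) + 1))
    = ((1-P) * (P ^ (lam (i+2) * (Ssum lam (i+1) + i + 1)) * poch P 1 (lam (i+2))))
        / poch P (Ssum lam (i+1) + i + 1) (lam (i+2) + 1)))]
  rw [Finset.prod_div_distrib, Finset.prod_mul_distrib, Finset.prod_mul_distrib,
    Finset.prod_const, Finset.card_range, prod_pow_eq_pow_sum]
  ring

lemma poch_mul (P : ℂ) (a b : ℕ) : poch P 1 a * poch P (a+1) b = poch P 1 (a+b) := by
  unfold poch
  rw [prod_range_add]
  congr 1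
  apply Finset.prod_congr rfl
  intro j _
  rw [show 1 + (a + j) = a + 1 + j from by omega]

lemma tele (P : ℂ) (lam : ℕ → ℕ) :
    ∀ k, poch P 1 (lam 1) * ∏ i ∈ Finset.range k, poch P (Ssum lam (i+1) + i + 1) (lam (i+2) + 1)
      = poch P 1 (Ssum lam (k+1) + k) := by
  intro k
  induction k with
  | zero => simp [Ssum_one]
  | succ k ih =>
    rw [Finset.prod_range_succ, ← mul_assoc, ih]
    rw [show Ssum lam (k+1) + k + 1 = (Ssum lam (k+1) + k) + 1 from rfl, poch_mul]
    congr 1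
    rw [show Ssum lam (k+1+1) = Ssum lam (k+1) + lam (k+2) from Ssum_succ lam (k+1)]
    omega

lemma exp_id (lam : ℕ → ℕ) : ∀ k : ℕ,
    ((((Ssum lam (k+1)) ^ 2 : ℕ)) : ℤ) +
        ∑ i ∈ Finset.Icc 1 (k+1), (((2 * (i - 1) * lam i : ℕ) : ℤ) - ((lam i ^ 2 : ℕ) : ℤ))
      = 2 * ((∑ i ∈ Finset.range k, lam (i+2) * (Ssum lam (i+1) + i + 1) : ℕ) : ℤ) := by
  intro k
  induction k with
  | zero =>
    simp [Ssum_one, Finset.Icc_self]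
  | succ k ih =>
    rw [Finset.sum_Icc_succ_top (by omega : 1 ≤ k + 1 + 1), Finset.sum_range_succ,
      Ssum_succ lam (k+1)]
    rw [show k + 1 + 1 - 1 = k + 1 from by omega]
    push_cast at ih ⊢
    linear_combination ih

lemma Cfac_val (q : ℝ) (h0 : 0 < q) (h1 : q < 1) (n : ℕ) (hn : 2 ≤ n) (lam : ℕ → ℕ) :
    (∏ j ∈ Finset.range (n-1), (1 - (q:ℂ)^2 * ((q:ℂ)^2)^j)) / (1 - (q:ℂ)^2)^(n-1)
        * Cfac ((q:ℂ)^2) lam (n-1) = hnVal q n lam := by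
  set P : ℂ := (q:ℂ)^2 with hP
  have hpoch : ∀ b : ℕ, ∏ j ∈ Finset.range b, (1 - (q:ℂ)^2 * ((q:ℂ)^2)^j) = poch P 1 b := by
    intro b
    unfold poch
    apply Finset.prod_congr rfl
    intro j _
    rw [pow_add, pow_one, hP]
  -- the exponent identity
  have hE := exp_id lam (n-1)
  rw [show n - 1 + 1 = n from by omega] at hE
  -- hnVal in poch form
  unfold hnVal
  have hSn : (∑ i ∈ Finset.Icc 1 n, lam i) = Ssum lam n := rfl
  rw [hSn, hE]
  have hzpow : (q:ℂ) ^ ((2:ℤ) * ((∑ i ∈ Finset.range (n-1),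
        lam (i+2) * (Ssum lam (i+1) + i + 1) : ℕ) : ℤ))
      = P ^ (∑ i ∈ Finset.range (n-1), lam (i+2) * (Ssum lam (i+1) + i + 1)) := by
    rw [show ((2:ℤ) * ((∑ i ∈ Finset.range (n-1),
        lam (i+2) * (Ssum lam (i+1) + i + 1) : ℕ) : ℤ))
      = ((2 * ∑ i ∈ Finset.range (n-1), lam (i+2) * (Ssum lam (i+1) + i + 1) : ℕ) : ℤ) from by
        push_cast; ring]
    rw [zpow_natCast, pow_mul]
  rw [hzpow]
  -- numerator product over Icc 1 n
  have hnum : ∏ i ∈ Finset.Icc 1 n, ∏ j ∈ Finset.range (lam i), (1 - (q:ℂ)^2 * ((q:ℂ)^2)^j)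
      = poch P 1 (lam 1) * ∏ i ∈ Finset.range (n-1), poch P 1 (lam (i+2)) := by
    rw [Finset.prod_congr rfl (fun i _ => hpoch (lam i))]
    rw [show Finset.Icc 1 n = insert 1 (Finset.Icc 2 n) from by
      ext y; simp only [Finset.mem_Icc, Finset.mem_insert]; omega]
    rw [Finset.prod_insert (by simp)]
    congr 1
    rw [← Finset.Ico_add_one_right_eq_Icc, Finset.prod_Ico_eq_prod_range]
    rw [show n + 1 - 2 = n - 1 from by omega]
    apply Finset.prod_congr rfl
    intro i _
    rw [Nat.add_comm 2 i]
  rw [hnum, hpoch (n-1), hpoch (Ssum lam n + n - 1)]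
  -- Cfac expansion and telescoping
  rw [Cfac_eq]
  have htele := tele P lam (n-1)
  rw [show n - 1 + 1 = n from by omega] at htele
  rw [show Ssum lam n + n - 1 = Ssum lam n + (n-1) from by omega]
  -- nonvanishing
  have h1P : ((1:ℂ) - P) ^ (n-1) ≠ 0 := by
    apply pow_ne_zero
    apply one_sub_ne
    rw [hP, norm_pow, Complex.norm_real, Real.norm_eq_abs, abs_of_pos h0]
    nlinarith
  have hD : ∏ i ∈ Finset.range (n-1), poch P (Ssum lam (i+1) + i + 1) (lam (i+2) + 1) ≠ 0 :=
    Finset.prod_ne_zero_iff.mpr (fun i _ => poch_ne_zero q h0 h1 _ _ (by omega))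
  have hT : poch P 1 (Ssum lam n + (n-1)) ≠ 0 := poch_ne_zero q h0 h1 _ _ (by omega)
  field_simp
  linear_combination (-(poch P 1 (n-1) *
      (q:ℂ)^(2*(∑ i ∈ Finset.range (n-1), lam (i+2) * (Ssum lam (i+1) + i + 1))) *
      ∏ i ∈ Finset.range (n-1), poch P 1 (lam (i+2)))) * htele

end Nest

/-- For any `φ` in the span of the `z^λ w^λ` (i.e. in `ℂ[Q_1,…,Q_{n-1}]`), the invariant
functional is given by the multiple Jackson `q²`-integral:
`h_n(φ) = ((q²;q²)_{n-1}/(1−q²)^{n-1}) ∫_0^1 ∫_0^{Q_{n-1}} ⋯ ∫_0^{Q_2} φ d_{q²}Q_1 ⋯ d_{q²}Q_{n-1}`,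
where `h_n` is determined on basis monomials by `hnVal`. -/
theorem haar_as_multiple_jackson_integral (n : ℕ) (q : ℝ) (hn : 2 ≤ n)
    (h0 : 0 < q) (h1 : q < 1) (s : Finset (ℕ → ℕ)) (coef : (ℕ → ℕ) → ℂ)
    (hs : ∀ lam ∈ s, ∀ j, lam j ≠ 0 → 1 ≤ j ∧ j ≤ n)
    (hφ : ∃ lam ∈ s, coef lam ≠ 0) :
    (∏ j ∈ Finset.range (n - 1), (1 - (q : ℂ) ^ 2 * ((q : ℂ) ^ 2) ^ j)) /
        (1 - (q : ℂ) ^ 2) ^ (n - 1) *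
        hnInt q n (fun Q => ∑ lam ∈ s, coef lam * monoQ q n lam Q) =
      ∑ lam ∈ s, coef lam * hnVal q n lam := by
  rw [hnInt_eval q h0 h1 n hn s coef, Finset.mul_sum]
  apply Finset.sum_congr rfl
  intro lam _
  rw [← Cfac_val q h0 h1 n hn lam]
  ring
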